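/- Let D be a finite digraph with root r, and let H be a subgraph of D. If for some vertex u ≠ r the maximum number of pairwise edge-disjoint r→u paths in H is strictly less than in D, then there exists an edge e ∈ E(D)\E(H) with head v such that for every set I of edges entering v which arises as the set of last edges of a system of pairwise edge-disjoint r→v paths in H, the set I+e arises as the set of last edges of a system of pairwise edge-disjoint r→v paths in H+e. -/

import Mathlib

attribute [local instance] Classical.propDecidable

/-- A finite digraph: edges `E` with tail and head maps (parallel edges allowed). -/
structure Digraph' (V E : Type) where
  tail : E → V
  head : E → V

namespace Digraph'

variable {V E : Type} [Fintype V] [Fintype E]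

/-- `es` is a directed walk from `r` to `v`. -/
def IsWalk (D : Digraph' V E) : V → V → List E → Prop
  | r, v, [] => r = v
  | r, v, e :: es => D.tail e = r ∧ D.IsWalk (D.head e) v es

/-- `es` is a directed path from `r` to `v` using only edges of `F`. -/
def IsPathIn (D : Digraph' V E) (F : Set E) (r v : V) (es : List E) : Prop :=
  D.IsWalk r v es ∧ (∀ e ∈ es, e ∈ F) ∧ (r :: es.map D.head).Nodup

/-- The members of a list of paths are pairwise edge-disjoint. -/
def EdgeDisjoint (P : List (List E)) : Prop :=
  P.Pairwise (fun p q => ∀ e, e ∈ p → e ∉ q)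

/-- The maximum number of pairwise edge-disjoint `r → v` paths inside `F`. -/
noncomputable def lam (D : Digraph' V E) (F : Set E) (r v : V) : ℕ :=
  sSup {k | ∃ P : List (List E), P.length = k ∧ (∀ p ∈ P, D.IsPathIn F r v p) ∧
    EdgeDisjoint P}

/-- The set of edges of `F` whose head is `v`. -/
def inEdges (D : Digraph' V E) (F : Set E) (v : V) : Set E := {e ∈ F | D.head e = v}

/-- The in-degree of `v` in the subgraph `F`. -/
noncomputable def indeg (D : Digraph' V E) (F : Set E) (v : V) : ℕ :=
  (D.inEdges F v).ncard

/-- `I` arises as the set of last edges of a system of pairwise edge-disjoint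
`r → v` paths in `F` (membership in the gammoid `G_F(v)`). -/
def InGammoid (D : Digraph' V E) (F : Set E) (r v : V) (I : Set E) : Prop :=
  ∃ P : List (List E), (∀ p ∈ P, D.IsPathIn F r v p) ∧ EdgeDisjoint P ∧
    I = {e | ∃ p ∈ P, p.getLast? = some e}

/-- `F` is an `r`-flame: the in-degree of each `v ≠ r` equals λ_F(r,v). -/
def IsFlame (D : Digraph' V E) (r : V) (F : Set E) : Prop :=
  ∀ v, v ≠ r → D.indeg F v = D.lam F r v

/-- Total of `x` on the in-edges of `v`. -/
noncomputable def inflow (D : Digraph' V E) (x : E → ℝ) (v : V) : ℝ :=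
  ∑ e, if D.head e = v then x e else 0

/-- Total of `x` on the out-edges of `v`. -/
noncomputable def outflow (D : Digraph' V E) (x : E → ℝ) (v : V) : ℝ :=
  ∑ e, if D.tail e = v then x e else 0

/-- Total of `x` on the edges entering the vertex set `W`. -/
noncomputable def rhoSet (D : Digraph' V E) (x : E → ℝ) (W : Set V) : ℝ :=
  ∑ e, if D.head e ∈ W ∧ D.tail e ∉ W then x e else 0

/-- `x` is a (nonnegative) `r → v` flow. -/
def IsFlow (D : Digraph' V E) (r v : V) (x : E → ℝ) : Prop :=
  (∀ e, 0 ≤ x e) ∧ (∀ u, u ≠ r → u ≠ v → D.inflow x u = D.outflow x u) ∧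
    D.inflow x r = 0 ∧ D.outflow x v = 0

/-- The flow-connectivity from `r` to `v` under capacity `c`. -/
noncomputable def lamF (D : Digraph' V E) (r v : V) (c : E → ℝ) : ℝ :=
  sSup {a | ∃ x, D.IsFlow r v x ∧ x ≤ c ∧ D.outflow x r = a}

/-- Characteristic vector of an edge. -/
noncomputable def chi (e : E) : E → ℝ := fun e' => if e' = e then 1 else 0

/-- Restriction of `x` to the in-edges of `v` (zero elsewhere). -/
noncomputable def restrictIn (D : Digraph' V E) (v : V) (x : E → ℝ) : E → ℝ :=
  fun e => if D.head e = v then x e else 0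

/-- The polygammoid `G_c(v)`: restrictions to the in-edges of `v`
of `r → v` flows bounded by `c`. -/
def polygammoid (D : Digraph' V E) (r v : V) (c : E → ℝ) : Set (E → ℝ) :=
  {s | ∃ x, D.IsFlow r v x ∧ x ≤ c ∧ D.restrictIn v x = s}

/-- `D` has no parallel edges. -/
def NoParallel (D : Digraph' V E) : Prop :=
  ∀ e e', D.tail e = D.tail e' → D.head e = D.head e' → e = e'

/-- `es` is a directed cycle. -/
def IsCycle (D : Digraph' V E) (es : List E) : Prop :=
  es ≠ [] ∧ ∃ u, D.IsWalk u u es ∧ (es.map D.head).Nodup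

/-- Characteristic vector of a list of edges. -/
noncomputable def charVec (es : List E) : E → ℝ :=
  fun e => ((es.filter (fun e' => e' = e)).length : ℝ)

end Digraph'
set_option linter.unusedSectionVars false
namespace Digraph'

variable {V E : Type} [Fintype V] [Fintype E] {G : Digraph' V E}

theorem walk_append {a b c : V} {es fs : List E} (h1 : G.IsWalk a b es)
    (h2 : G.IsWalk b c fs) : G.IsWalk a c (es ++ fs) := by
  induction es generalizing a with
  | nil => cases h1; simpa using h2
  | cons e es ih => exact ⟨h1.1, ih h1.2⟩

theorem walk_append_inv {a c : V} {es fs : List E} (h : G.IsWalk a c (es ++ fs)) :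
    ∃ b, G.IsWalk a b es ∧ G.IsWalk b c fs := by
  induction es generalizing a with
  | nil => exact ⟨a, rfl, h⟩
  | cons e es ih =>
    obtain ⟨b, h1, h2⟩ := ih h.2
    exact ⟨b, ⟨h.1, h1⟩, h2⟩

theorem mem_head_of_walk {a b : V} {es : List E} (h : G.IsWalk a b es) (hne : es ≠ []) :
    b ∈ es.map G.head := by
  induction es generalizing a with
  | nil => exact absurd rfl hne
  | cons e es ih =>
    rcases es with _ | ⟨f, fs⟩
    · cases h.2; simp
    · simpa using Or.inr (by simpa using ih h.2 (by simp))

theorem head_getLast {a b : V} {es : List E} (h : G.IsWalk a b es) (hne : es ≠ []) :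
    G.head (es.getLast hne) = b := by
  induction es generalizing a with
  | nil => exact absurd rfl hne
  | cons e es ih =>
    rcases es with _ | ⟨f, fs⟩
    · cases h.2; simp [List.getLast]
    · rw [List.getLast_cons (by simp)]
      exact ih h.2 (by simp)

/-- Every walk contains a vertex-simple path with the same endpoints whose
edges (hence heads) come from the walk. -/
theorem shortcut {a b : V} {es : List E} (h : G.IsWalk a b es) :
    ∃ fs : List E, G.IsWalk a b fs ∧ (∀ e ∈ fs, e ∈ es) ∧
      (a :: fs.map G.head).Nodup := by
  induction es generalizing a with
  | nil => exact ⟨[], h, by simp, by simp⟩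
  | cons e es ih =>
    obtain ⟨fs, hw, hsub, hnd⟩ := ih h.2
    by_cases ha : a ∈ (G.head e) :: fs.map G.head
    · rcases List.mem_cons.mp ha with ha | ha
      · exact ⟨fs, ha ▸ hw, fun x hx => List.mem_cons_of_mem _ (hsub x hx), ha ▸ hnd⟩
      · obtain ⟨g, hg, hga⟩ := List.mem_map.mp ha
        obtain ⟨u, w, rfl⟩ := List.append_of_mem hg
        obtain ⟨m, hm1, hm2⟩ := walk_append_inv hw
        have hnd' : (a :: w.map G.head).Nodup := by
          have : ((G.head e :: (u.map G.head)) ++ (a :: w.map G.head)).Nodup := by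
            simpa [hga] using hnd
          exact (List.nodup_append.mp this).2.1
        refine ⟨w, ?_, fun x hx => List.mem_cons_of_mem _ (hsub x (by simp [hx])), hnd'⟩
        have : G.head g = a := hga
        exact this ▸ hm2.2
    · exact ⟨e :: fs, ⟨h.1, hw⟩, by
        intro x hx; rcases List.mem_cons.mp hx with rfl | hx
        · simp
        · exact List.mem_cons_of_mem _ (hsub x hx), by simp [hnd, ha]⟩

end Digraph'
set_option linter.unusedSectionVars false
set_option maxHeartbeats 1000000
namespace Digraph'

variable {V E : Type} [Fintype V] [Fintype E] (G : Digraph' V E)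

/-- Number of edges of the list `l` with head `w`. -/
noncomputable def inL (l : List E) (w : V) : ℕ := (l.filter (fun e => G.head e = w)).length

/-- Number of edges of the list `l` with tail `w`. -/
noncomputable def outL (l : List E) (w : V) : ℕ := (l.filter (fun e => G.tail e = w)).length

variable {G}

theorem inL_cons (e : E) (es : List E) (w : V) :
    inL G (e :: es) w = (if G.head e = w then 1 else 0) + inL G es w := by
  by_cases h : G.head e = w <;> simp [inL, List.filter_cons, h] <;> omega

theorem outL_cons (e : E) (es : List E) (w : V) :
    outL G (e :: es) w = (if G.tail e = w then 1 else 0) + outL G es w := by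
  by_cases h : G.tail e = w <;> simp [outL, List.filter_cons, h] <;> omega

theorem inL_path {es : List E} (hnd : (es.map G.head).Nodup) (w : V) :
    inL G es w = if w ∈ es.map G.head then 1 else 0 := by
  induction es with
  | nil => simp [inL]
  | cons e es ih =>
    simp only [List.map_cons, List.nodup_cons] at hnd
    rw [inL_cons, ih hnd.2]
    have h1 : ¬(G.head e = w ∧ w ∈ es.map G.head) := fun ⟨he, hm⟩ => hnd.1 (he ▸ hm)
    simp only [List.map_cons, List.mem_cons]
    split_ifs <;> first | rfl | omega | tauto
  
theorem outL_path {a b : V} {es : List E} (h : G.IsWalk a b es)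
    (hnd : (a :: es.map G.head).Nodup) (hne : es ≠ []) (w : V) :
    outL G es w = if (w = a ∨ (w ∈ es.map G.head ∧ w ≠ b)) then 1 else 0 := by
  induction es generalizing a with
  | nil => simp at hne
  | cons e es ih =>
    have hta : G.tail e = a := h.1
    have hane : ¬ a = G.head e ∧ a ∉ es.map G.head := by
      have := (List.nodup_cons.mp hnd).1
      simpa using this
    rcases eq_or_ne es [] with rfl | hne'
    · have hb : G.head e = b := h.2
      rw [outL_cons, hta]
      simp only [outL, List.filter_nil, List.length_nil, List.map_cons, List.map_nil,
        List.mem_cons, List.mem_nil_iff, hb]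
      have hab : a ≠ b := fun hh => hane.1 (by rw [hh, hb])
      have f0 : a = w → w = b → False := fun p q => hab (p.trans q)
      split_ifs <;> first | rfl | omega | tauto
    · have hmemb : b ∈ es.map G.head := mem_head_of_walk h.2 hne'
      have hnd2 : (G.head e :: es.map G.head).Nodup := by
        have := (List.nodup_cons.mp hnd).2
        simpa using this
      have key := ih h.2 hnd2 hne'
      have hhe : G.head e ∉ es.map G.head := (List.nodup_cons.mp hnd2).1
      have hheb : G.head e ≠ b := fun hh => hhe (hh ▸ hmemb)
      have f1 : a = w → w = G.head e → False := fun p q => hane.1 (p.trans q)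
      have f2 : a = w → w ∈ es.map G.head → False := fun p q => hane.2 (p ▸ q)
      have f3 : w = G.head e → w ∈ es.map G.head → False := fun p q => hhe (p ▸ q)
      have f4 : w = G.head e → w = b → False := fun p q => hheb (p.symm.trans q)
      rw [outL_cons, hta, key]
      simp only [List.map_cons, List.mem_cons]
      by_cases hwa : w = a
      · rw [if_pos hwa.symm, if_neg, if_pos (Or.inl hwa)]
        rintro (p | ⟨p, _⟩)
        · exact f1 hwa.symm p
        · exact f2 hwa.symm p
      · rw [if_neg (fun h => hwa h.symm), zero_add]
        have hiff : (w = G.head e ∨ (w ∈ es.map G.head ∧ w ≠ b)) ↔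
            (w = a ∨ ((w = G.head e ∨ w ∈ es.map G.head) ∧ w ≠ b)) := by
          constructor
          · rintro (p | ⟨p, q⟩)
            · exact Or.inr ⟨Or.inl p, fun q => f4 p q⟩
            · exact Or.inr ⟨Or.inr p, q⟩
          · rintro (p | ⟨p | p, q⟩)
            · exact absurd p hwa
            · exact Or.inl p
            · exact Or.inr ⟨p, q⟩
        rw [if_congr hiff rfl rfl]

end Digraph'
namespace Digraph'

variable {V E : Type} [Fintype V] [Fintype E] (G : Digraph' V E)

/-- Number of edges of `A` with head `w`. -/
noncomputable def inCard (A : Finset E) (w : V) : ℕ := (A.filter (fun e => G.head e = w)).card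

/-- Number of edges of `A` with tail `w`. -/
noncomputable def outCard (A : Finset E) (w : V) : ℕ := (A.filter (fun e => G.tail e = w)).card

/-- Edges of `A` leaving the vertex set `S`. -/
noncomputable def crossOut (A : Finset E) (S : Finset V) : ℕ :=
  (A.filter (fun e => G.tail e ∈ S ∧ G.head e ∉ S)).card

/-- Edges of `A` entering the vertex set `S`. -/
noncomputable def crossIn (A : Finset E) (S : Finset V) : ℕ :=
  (A.filter (fun e => G.tail e ∉ S ∧ G.head e ∈ S)).card

/-- Number of edges of `F` leaving the vertex set `S`. -/
noncomputable def cutVal (F : Set E) (S : Finset V) : ℕ :=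
  (Finset.univ.filter (fun e => e ∈ F ∧ G.tail e ∈ S ∧ G.head e ∉ S)).card

/-- `A` is an integral unit `r → v` flow inside `F`. -/
structure FlowAt (F : Set E) (r v : V) (A : Finset E) : Prop where
  sub : ∀ e ∈ A, e ∈ F
  consv : ∀ w, w ≠ r → w ≠ v → inCard G A w = outCard G A w
  noout : outCard G A v = 0

variable {G}

theorem inCard_toFinset {l : List E} (hl : l.Nodup) (w : V) :
    inCard G l.toFinset w = inL G l w := by
  have h : Finset.filter (fun e => G.head e = w) l.toFinset =
      (l.filter (fun e => G.head e = w)).toFinset := by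
    ext x; simp [List.mem_filter]
  rw [inCard, inL, h, List.toFinset_card_of_nodup (hl.filter _)]

theorem outCard_toFinset {l : List E} (hl : l.Nodup) (w : V) :
    outCard G l.toFinset w = outL G l w := by
  have h : Finset.filter (fun e => G.tail e = w) l.toFinset =
      (l.filter (fun e => G.tail e = w)).toFinset := by
    ext x; simp [List.mem_filter]
  rw [outCard, outL, h, List.toFinset_card_of_nodup (hl.filter _)]

theorem sum_outCard (A : Finset E) (S : Finset V) :
    ∑ w ∈ S, outCard G A w = (A.filter (fun e => G.tail e ∈ S)).card := by
  simp only [outCard, Finset.card_filter]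
  rw [Finset.sum_comm]
  refine Finset.sum_congr rfl fun e _ => ?_
  rw [Finset.sum_ite_eq S (G.tail e) (fun _ => 1)]

theorem sum_inCard (A : Finset E) (S : Finset V) :
    ∑ w ∈ S, inCard G A w = (A.filter (fun e => G.head e ∈ S)).card := by
  simp only [inCard, Finset.card_filter]
  rw [Finset.sum_comm]
  refine Finset.sum_congr rfl fun e _ => ?_
  rw [Finset.sum_ite_eq S (G.head e) (fun _ => 1)]

theorem sum_div_eq (A : Finset E) (S : Finset V) :
    (∑ w ∈ S, ((outCard G A w : ℤ) - inCard G A w)) =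
      (crossOut G A S : ℤ) - crossIn G A S := by
  have h1 : (A.filter (fun e => G.tail e ∈ S)).card =
      (A.filter (fun e => G.tail e ∈ S ∧ G.head e ∈ S)).card + crossOut G A S := by
    rw [crossOut, ← Finset.filter_filter, ← Finset.filter_filter,
      Finset.card_filter_add_card_filter_not]
  have h2 : (A.filter (fun e => G.head e ∈ S)).card =
      (A.filter (fun e => G.tail e ∈ S ∧ G.head e ∈ S)).card + crossIn G A S := by
    rw [crossIn]
    have : A.filter (fun e => G.tail e ∉ S ∧ G.head e ∈ S) =
        A.filter (fun e => G.head e ∈ S ∧ G.tail e ∉ S) := by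
      apply Finset.filter_congr; intro e _; constructor <;> exact fun h => ⟨h.2, h.1⟩
    rw [this]
    have : A.filter (fun e => G.tail e ∈ S ∧ G.head e ∈ S) =
        A.filter (fun e => G.head e ∈ S ∧ G.tail e ∈ S) := by
      apply Finset.filter_congr; intro e _; constructor <;> exact fun h => ⟨h.2, h.1⟩
    rw [this, ← Finset.filter_filter, ← Finset.filter_filter,
      Finset.card_filter_add_card_filter_not]
  rw [Finset.sum_sub_distrib, ← Nat.cast_sum, ← Nat.cast_sum, sum_outCard, sum_inCard, h1, h2]
  push_cast
  ring

theorem inCard_r_zero (hr : ∀ e, G.head e ≠ r) (A : Finset E) : inCard G A r = 0 := by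
  rw [inCard, Finset.card_eq_zero, Finset.filter_eq_empty_iff]
  exact fun {e} _ => hr e

/-- Flow value: the out-degree of the root equals the in-degree of the sink. -/
theorem flow_value {F : Set E} {r v : V} {A : Finset E} (hr : ∀ e, G.head e ≠ r)
    (hA : FlowAt G F r v A) (hv : v ≠ r) : outCard G A r = inCard G A v := by
  have h0 : (∑ w ∈ (Finset.univ : Finset V), ((outCard G A w : ℤ) - inCard G A w)) = 0 := by
    rw [Finset.sum_sub_distrib, ← Nat.cast_sum, ← Nat.cast_sum, sum_outCard, sum_inCard]
    simp
  have hsub : ({r, v} : Finset V) ⊆ Finset.univ := Finset.subset_univ _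
  rw [← Finset.sum_subset hsub (fun w _ hw => by
    simp only [Finset.mem_insert, Finset.mem_singleton] at hw
    push_neg at hw
    rw [hA.consv w hw.1 hw.2]; ring)] at h0
  rw [Finset.sum_pair (fun h => hv h.symm)] at h0
  rw [inCard_r_zero hr, hA.noout] at h0
  push_cast at h0
  omega

/-- The value of a flow equals net flow across any `r`–`v` cut. -/
theorem flow_cut {F : Set E} {r v : V} {A : Finset E} {S : Finset V}
    (hr : ∀ e, G.head e ≠ r) (hA : FlowAt G F r v A) (hv : v ≠ r)
    (hrS : r ∈ S) (hvS : v ∉ S) :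
    (inCard G A v : ℤ) = (crossOut G A S : ℤ) - crossIn G A S := by
  rw [← sum_div_eq]
  have : (∑ w ∈ S, ((outCard G A w : ℤ) - inCard G A w)) =
      ∑ w ∈ ({r} : Finset V), ((outCard G A w : ℤ) - inCard G A w) := by
    refine (Finset.sum_subset (by simpa using hrS) (fun w hw hw' => ?_)).symm
    simp only [Finset.mem_singleton] at hw'
    rw [hA.consv w hw' (fun h => hvS (h ▸ hw))]; ring
  rw [this, Finset.sum_singleton, inCard_r_zero hr, flow_value hr hA hv]
  push_cast; ring

theorem flow_weak {F : Set E} {r v : V} {A : Finset E} {S : Finset V}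
    (hr : ∀ e, G.head e ≠ r) (hA : FlowAt G F r v A) (hv : v ≠ r)
    (hrS : r ∈ S) (hvS : v ∉ S) : inCard G A v ≤ crossOut G A S := by
  have := flow_cut hr hA hv hrS hvS
  omega

theorem crossOut_le_cutVal {F : Set E} {A : Finset E} (hsub : ∀ e ∈ A, e ∈ F)
    (S : Finset V) : crossOut G A S ≤ cutVal G F S := by
  apply Finset.card_le_card
  intro e he
  simp only [Finset.mem_filter] at he ⊢
  exact ⟨Finset.mem_univ _, hsub e he.1, he.2⟩

theorem cutVal_mono {F F' : Set E} (h : F ⊆ F') (S : Finset V) :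
    cutVal G F S ≤ cutVal G F' S := by
  apply Finset.card_le_card
  intro e he
  simp only [Finset.mem_filter] at he ⊢
  exact ⟨Finset.mem_univ _, h he.2.1, he.2.2⟩

end Digraph'
namespace Digraph'

variable {V E : Type} [Fintype V] [Fintype E] {G : Digraph' V E} {F : Set E} {r v : V}

theorem path_nodup {a : V} {b : V} {es : List E} (hnd : (a :: es.map G.head).Nodup) :
    es.Nodup :=
  ((List.nodup_cons.mp hnd).2).of_map _

theorem path_flow (hv : v ≠ r) {q : List E} (hq : G.IsPathIn F r v q) :
    G.FlowAt F r v q.toFinset ∧ inCard G q.toFinset v = 1 ∧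
      ∃ el, q.getLast? = some el ∧
        q.toFinset.filter (fun e => G.head e = v) = {el} := by
  obtain ⟨hw, hFsub, hnd⟩ := hq
  have hne : q ≠ [] := by rintro rfl; exact hv (hw : r = v).symm
  have hndm : (q.map G.head).Nodup := (List.nodup_cons.mp hnd).2
  have hqnd : q.Nodup := hndm.of_map _
  have hin : ∀ w, inCard G q.toFinset w = if w ∈ q.map G.head then 1 else 0 :=
    fun w => (inCard_toFinset hqnd w).trans (inL_path hndm w)
  have hout : ∀ w, outCard G q.toFinset w =
      if (w = r ∨ (w ∈ q.map G.head ∧ w ≠ v)) then 1 else 0 :=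
    fun w => (outCard_toFinset hqnd w).trans (outL_path hw hnd hne w)
  have hvmem : v ∈ q.map G.head := mem_head_of_walk hw hne
  have hflow : G.FlowAt F r v q.toFinset := by
    refine ⟨fun e he => hFsub e (List.mem_toFinset.mp he), fun w hwr hwv => ?_, ?_⟩
    · rw [hin, hout]
      refine if_congr ?_ rfl rfl
      constructor
      · exact fun h => Or.inr ⟨h, hwv⟩
      · rintro (h | ⟨h, _⟩); · exact absurd h hwr
        · exact h
    · rw [hout]
      simp [hv]
  have hval : inCard G q.toFinset v = 1 := by rw [hin, if_pos hvmem]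
  refine ⟨hflow, hval, q.getLast hne, (List.getLast?_eq_getLast hne), ?_⟩
  have hmem : q.getLast hne ∈ q.toFinset.filter (fun e => G.head e = v) := by
    simp only [Finset.mem_filter, List.mem_toFinset]
    exact ⟨List.getLast_mem hne, head_getLast hw hne⟩
  have hcard : (q.toFinset.filter (fun e => G.head e = v)).card = 1 := hval
  obtain ⟨x, hx⟩ := Finset.card_eq_one.mp hcard
  rw [hx] at hmem ⊢
  rw [Finset.mem_singleton.mp hmem]

theorem inCard_union {A B : Finset E} (hd : Disjoint A B) (w : V) :
    inCard G (A ∪ B) w = inCard G A w + inCard G B w := by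
  rw [inCard, Finset.filter_union,
    Finset.card_union_of_disjoint (Finset.disjoint_filter_filter hd)]; rfl

theorem outCard_union {A B : Finset E} (hd : Disjoint A B) (w : V) :
    outCard G (A ∪ B) w = outCard G A w + outCard G B w := by
  rw [outCard, Finset.filter_union,
    Finset.card_union_of_disjoint (Finset.disjoint_filter_filter hd)]; rfl

theorem flow_union {A B : Finset E} (hA : G.FlowAt F r v A) (hB : G.FlowAt F r v B)
    (hd : Disjoint A B) : G.FlowAt F r v (A ∪ B) := by
  refine ⟨fun e he => ?_, fun w hwr hwv => ?_, ?_⟩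
  · rcases Finset.mem_union.mp he with h | h
    exacts [hA.sub e h, hB.sub e h]
  · rw [inCard_union hd, outCard_union hd, hA.consv w hwr hwv, hB.consv w hwr hwv]
  · rw [outCard_union hd, hA.noout, hB.noout]

theorem sys_flow (hv : v ≠ r) {P : List (List E)} (hP : ∀ p ∈ P, G.IsPathIn F r v p)
    (hd : EdgeDisjoint P) :
    G.FlowAt F r v P.flatten.toFinset ∧ inCard G P.flatten.toFinset v = P.length ∧
      (↑(P.flatten.toFinset.filter (fun e => G.head e = v)) : Set E) =
        {e | ∃ p ∈ P, p.getLast? = some e} := by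
  induction P with
  | nil =>
    refine ⟨⟨by simp, fun w _ _ => by simp [inCard, outCard], by simp [outCard]⟩, by
      simp [inCard], by simp⟩
  | cons p P ih =>
    obtain ⟨hd1, hd2⟩ := List.pairwise_cons.mp hd
    obtain ⟨hfl, hval, hset⟩ := ih (fun q hq => hP q (List.mem_cons_of_mem _ hq)) hd2
    obtain ⟨pfl, pval, el, hel, hels⟩ := path_flow hv (hP p List.mem_cons_self)
    have hdisj : Disjoint p.toFinset P.flatten.toFinset := by
      rw [Finset.disjoint_left]
      intro e hep heP
      obtain ⟨q, hq, heq⟩ := List.mem_flatten.mp (List.mem_toFinset.mp heP)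
      exact hd1 q hq e (List.mem_toFinset.mp hep) heq
    have htf : (p :: P).flatten.toFinset = p.toFinset ∪ P.flatten.toFinset := by
      simp [List.toFinset_append]
    refine ⟨htf ▸ flow_union pfl hfl hdisj, ?_, ?_⟩
    · rw [htf, inCard_union hdisj, pval, hval]; simp [Nat.add_comm]
    · rw [htf, Finset.filter_union, Finset.coe_union, hels, hset]
      ext x
      simp only [Set.mem_union, Finset.coe_singleton, Set.mem_singleton_iff, Set.mem_setOf_eq,
        List.mem_cons]
      constructor
      · rintro (rfl | ⟨q, hq, hlq⟩)
        · exact ⟨p, Or.inl rfl, hel⟩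
        · exact ⟨q, Or.inr hq, hlq⟩
      · rintro ⟨q, rfl | hq, hlq⟩
        · left; rw [hel] at hlq; exact (Option.some_injective _ hlq).symm
        · exact Or.inr ⟨q, hq, hlq⟩

/-- The defining set of `lam`. -/
def SysLen (G : Digraph' V E) (F : Set E) (r v : V) : Set ℕ :=
  {k | ∃ P : List (List E), P.length = k ∧ (∀ p ∈ P, G.IsPathIn F r v p) ∧ EdgeDisjoint P}

theorem lam_eq_sSup : G.lam F r v = sSup (SysLen G F r v) := rfl

theorem sysLen_nonempty : (SysLen G F r v).Nonempty :=
  ⟨0, [], rfl, by simp, List.Pairwise.nil⟩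

theorem sysLen_bddAbove (hv : v ≠ r) : BddAbove (SysLen G F r v) := by
  refine ⟨Fintype.card E, fun k hk => ?_⟩
  obtain ⟨P, rfl, hP, hd⟩ := hk
  obtain ⟨_, hval, _⟩ := sys_flow hv hP hd
  calc P.length = inCard G P.flatten.toFinset v := hval.symm
    _ ≤ P.flatten.toFinset.card := Finset.card_filter_le _ _
    _ ≤ Fintype.card E := Finset.card_le_univ _

theorem le_lam (hv : v ≠ r) {P : List (List E)} (hP : ∀ p ∈ P, G.IsPathIn F r v p)
    (hd : EdgeDisjoint P) : P.length ≤ G.lam F r v :=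
  le_csSup (sysLen_bddAbove hv) ⟨P, rfl, hP, hd⟩

theorem lam_spec (hv : v ≠ r) : ∃ P : List (List E), P.length = G.lam F r v ∧
    (∀ p ∈ P, G.IsPathIn F r v p) ∧ EdgeDisjoint P :=
  Nat.sSup_mem sysLen_nonempty (sysLen_bddAbove hv)

theorem isPathIn_mono {F' : Set E} (h : F ⊆ F') {p : List E} (hp : G.IsPathIn F r v p) :
    G.IsPathIn F' r v p :=
  ⟨hp.1, fun e he => h (hp.2.1 e he), hp.2.2⟩

theorem lam_mono {F' : Set E} (hv : v ≠ r) (h : F ⊆ F') : G.lam F r v ≤ G.lam F' r v := by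
  refine csSup_le_csSup (sysLen_bddAbove hv) sysLen_nonempty ?_
  rintro k ⟨P, rfl, hP, hd⟩
  exact ⟨P, rfl, fun p hp => isPathIn_mono h (hP p hp), hd⟩

theorem lam_le_cutVal (hr : ∀ e, G.head e ≠ r) (hv : v ≠ r) {S : Finset V}
    (hrS : r ∈ S) (hvS : v ∉ S) : G.lam F r v ≤ cutVal G F S := by
  obtain ⟨P, hlen, hP, hd⟩ := lam_spec (G := G) (F := F) hv
  obtain ⟨hfl, hval, _⟩ := sys_flow hv hP hd
  calc G.lam F r v = inCard G P.flatten.toFinset v := by rw [← hlen, hval]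
    _ ≤ crossOut G P.flatten.toFinset S := flow_weak hr hfl hv hrS hvS
    _ ≤ cutVal G F S := crossOut_le_cutVal hfl.sub S

end Digraph'
namespace Digraph'

variable {V E : Type} [Fintype V] [Fintype E] {G : Digraph' V E} {F : Set E} {r v : V}

/-- One step along an edge of `T`. -/
def Steps (G : Digraph' V E) (T : Set E) (a b : V) : Prop :=
  ∃ e ∈ T, G.tail e = a ∧ G.head e = b

/-- Reachability using edges of `T`. -/
def Reach (G : Digraph' V E) (T : Set E) (a b : V) : Prop :=
  Relation.ReflTransGen (G.Steps T) a b

theorem reach_walk {T : Set E} {a b : V} (h : G.Reach T a b) :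
    ∃ es : List E, G.IsWalk a b es ∧ ∀ e ∈ es, e ∈ T := by
  induction h using Relation.ReflTransGen.head_induction_on with
  | refl => exact ⟨[], rfl, by simp⟩
  | head hstep _ ih =>
    obtain ⟨es, hw, hT⟩ := ih
    obtain ⟨e, heT, hta, hhd⟩ := hstep
    refine ⟨e :: es, ⟨hta, hhd ▸ hw⟩, ?_⟩
    intro x hx
    rcases List.mem_cons.mp hx with rfl | hx
    exacts [heT, hT x hx]

theorem inCard_mono {A B : Finset E} (h : B ⊆ A) (w : V) : inCard G B w ≤ inCard G A w :=
  Finset.card_le_card (Finset.filter_subset_filter _ h)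

theorem outCard_mono {A B : Finset E} (h : B ⊆ A) (w : V) : outCard G B w ≤ outCard G A w :=
  Finset.card_le_card (Finset.filter_subset_filter _ h)

theorem inCard_sdiff {A B : Finset E} (h : B ⊆ A) (w : V) :
    inCard G (A \ B) w + inCard G B w = inCard G A w := by
  have hfe : (A \ B).filter (fun e => G.head e = w) =
      A.filter (fun e => G.head e = w) \ B.filter (fun e => G.head e = w) := by
    ext x; simp only [Finset.mem_filter, Finset.mem_sdiff]; tauto
  rw [inCard, inCard, inCard, hfe,
    Finset.card_sdiff_add_card_eq_card (Finset.filter_subset_filter _ h)]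

theorem outCard_sdiff {A B : Finset E} (h : B ⊆ A) (w : V) :
    outCard G (A \ B) w + outCard G B w = outCard G A w := by
  have hfe : (A \ B).filter (fun e => G.tail e = w) =
      A.filter (fun e => G.tail e = w) \ B.filter (fun e => G.tail e = w) := by
    ext x; simp only [Finset.mem_filter, Finset.mem_sdiff]; tauto
  rw [outCard, outCard, outCard, hfe,
    Finset.card_sdiff_add_card_eq_card (Finset.filter_subset_filter _ h)]

/-- Decomposition of an integral flow into edge-disjoint paths whose last
edges are exactly the flow edges entering `v`. -/
theorem flow_decomp (hr : ∀ e, G.head e ≠ r) (hv : v ≠ r) :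
    ∀ A : Finset E, G.FlowAt F r v A →
      ∃ P : List (List E), (∀ p ∈ P, G.IsPathIn F r v p) ∧ EdgeDisjoint P ∧
        P.length = inCard G A v ∧
        {e | ∃ p ∈ P, p.getLast? = some e} =
          ↑(A.filter (fun e => G.head e = v)) ∧
        (∀ p ∈ P, ∀ e ∈ p, e ∈ A) := by
  suffices H : ∀ n, ∀ A : Finset E, A.card = n → G.FlowAt F r v A →
      ∃ P : List (List E), (∀ p ∈ P, G.IsPathIn F r v p) ∧ EdgeDisjoint P ∧
        P.length = inCard G A v ∧
        {e | ∃ p ∈ P, p.getLast? = some e} = ↑(A.filter (fun e => G.head e = v)) ∧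
        (∀ p ∈ P, ∀ e ∈ p, e ∈ A) by
    exact fun A hA => H A.card A rfl hA
  intro n
  induction n using Nat.strong_induction_on with
  | _ n ih =>
  rintro A rfl hA
  by_cases h0 : A.filter (fun e => G.head e = v) = ∅
  · refine ⟨[], by simp, List.Pairwise.nil, ?_, by simp [h0], by simp⟩
    simp [inCard, h0]
  · obtain ⟨e, he⟩ := Finset.nonempty_iff_ne_empty.mpr h0
    have heA : e ∈ A := (Finset.mem_filter.mp he).1
    have hev : G.head e = v := (Finset.mem_filter.mp he).2
    set A₀ : Finset E := A.filter (fun e' => G.head e' ≠ v) with hA₀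
    have hA₀sub : A₀ ⊆ A := Finset.filter_subset _ _
    set T : Set E := {x | x ∈ A₀} with hT
    have hvnotreach : ∀ w, G.Reach T r w → w ≠ v := by
      intro w hw
      rcases Relation.ReflTransGen.cases_tail hw with heq | ⟨c, _, e', he', _, hhd⟩
      · subst heq; exact Ne.symm hv
      · intro h
        exact (Finset.mem_filter.mp he').2 (hhd.trans h)
    have hu : G.Reach T r (G.tail e) := by
      by_contra hnr
      set S : Finset V := Finset.univ.filter (fun w => G.Reach T r w) with hS
      have hrS : r ∈ S := Finset.mem_filter.mpr ⟨Finset.mem_univ _, Relation.ReflTransGen.refl⟩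
      have hvS : v ∉ S := by
        simp only [hS, Finset.mem_filter, Finset.mem_univ, true_and]
        exact fun h => hvnotreach v h rfl
      have hclosed : ∀ e' ∈ A₀, G.tail e' ∈ S → G.head e' ∈ S := by
        intro e' he' ht
        simp only [hS, Finset.mem_filter, Finset.mem_univ, true_and] at ht ⊢
        exact ht.tail ⟨e', he', rfl, rfl⟩
      have hsubset : A.filter (fun e' => G.tail e' ∈ S ∧ G.head e' ∉ S) ⊆
          (A.filter (fun e' => G.head e' = v)).erase e := by
        intro e' he'
        simp only [Finset.mem_filter] at he'
        obtain ⟨he'A, htS, hhS⟩ := he'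
        have hhv : G.head e' = v := by
          by_contra hne
          exact hhS (hclosed e' (Finset.mem_filter.mpr ⟨he'A, hne⟩) htS)
        refine Finset.mem_erase.mpr ⟨?_, Finset.mem_filter.mpr ⟨he'A, hhv⟩⟩
        rintro rfl
        exact hnr (by simpa [hS, Finset.mem_filter] using htS)
      have hcross : crossOut G A S ≤ inCard G A v - 1 := by
        have h1 : ((A.filter (fun e' => G.head e' = v)).erase e).card =
            inCard G A v - 1 := by
          rw [Finset.card_erase_of_mem he]; rfl
        exact h1 ▸ Finset.card_le_card hsubset
      have hpos : 1 ≤ inCard G A v := by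
        rw [inCard]; exact Finset.card_pos.mpr ⟨e, he⟩
      have := flow_cut hr hA hv hrS hvS
      omega
    obtain ⟨es, hwes, hesT⟩ := reach_walk hu
    obtain ⟨p, hpw, hpsub, hpnd⟩ := shortcut hwes
    have hpA₀ : ∀ x ∈ p, x ∈ A₀ := fun x hx => hesT x (hpsub x hx)
    have hq : G.IsPathIn F r v (p ++ [e]) := by
      refine ⟨walk_append hpw ⟨rfl, hev⟩, ?_, ?_⟩
      · intro x hx
        rcases List.mem_append.mp hx with hx | hx
        · exact hA.sub x (hA₀sub (hpA₀ x hx))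
        · rw [List.mem_singleton.mp hx]; exact hA.sub e heA
      · have : r :: (p ++ [e]).map G.head = (r :: p.map G.head) ++ [v] := by
          simp [hev]
        rw [this, List.nodup_append]
        refine ⟨hpnd, by simp, ?_⟩
        intro x hx
        simp only [List.mem_singleton]
        rintro _ rfl rfl
        rcases List.mem_cons.mp hx with h | h
        · first | exact hv h | exact hv h.symm
        · obtain ⟨y, hy, hyv⟩ := List.mem_map.mp h
          exact (Finset.mem_filter.mp (hpA₀ y hy)).2 hyv
    set q : List E := p ++ [e] with hqdef
    obtain ⟨qfl, qval, el, hel, hels⟩ := path_flow hv hq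
    have hele : el = e := by
      rw [hqdef, List.getLast?_concat] at hel
      exact (Option.some_injective _ hel).symm
    rw [hele] at hels
    have hqsub : q.toFinset ⊆ A := by
      intro x hx
      rcases List.mem_append.mp (List.mem_toFinset.mp hx) with h | h
      · exact hA₀sub (hpA₀ x h)
      · rw [List.mem_singleton.mp h]; exact heA
    set A₂ : Finset E := A \ q.toFinset with hA₂
    have hA₂fl : G.FlowAt F r v A₂ := by
      refine ⟨fun x hx => hA.sub x (Finset.mem_sdiff.mp hx).1, fun w hwr hwv => ?_, ?_⟩
      · have h1 := inCard_sdiff (G := G) hqsub w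
        have h2 := outCard_sdiff (G := G) hqsub w
        rw [← hA₂] at h1 h2
        have h3 := hA.consv w hwr hwv
        have h4 := qfl.consv w hwr hwv
        omega
      · have h2 := outCard_sdiff (G := G) hqsub v
        rw [← hA₂] at h2
        have h3 := hA.noout
        have h4 := qfl.noout
        omega
    have hA₂val : inCard G A₂ v = inCard G A v - 1 := by
      have h1 := inCard_sdiff (G := G) hqsub v
      rw [← hA₂] at h1
      omega
    have hA₂card : A₂.card < A.card :=
      Finset.card_lt_card ⟨Finset.sdiff_subset, fun hsub' =>
        (Finset.mem_sdiff.mp (hsub' heA)).2 (by simp [hqdef])⟩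
    obtain ⟨P', hP'path, hP'disj, hP'len, hP'set, hP'sub⟩ := ih A₂.card hA₂card A₂ rfl hA₂fl
    have hA₂filter : A₂.filter (fun x => G.head x = v) =
        (A.filter (fun x => G.head x = v)).erase e := by
      ext x
      simp only [hA₂, Finset.mem_filter, Finset.mem_sdiff, Finset.mem_erase]
      constructor
      · rintro ⟨⟨hxA, hxq⟩, hxv⟩
        exact ⟨fun h => hxq (h ▸ (by simp [hqdef])), hxA, hxv⟩
      · rintro ⟨hxe, hxA, hxv⟩
        refine ⟨⟨hxA, fun hxq => ?_⟩, hxv⟩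
        have : x ∈ q.toFinset.filter (fun e => G.head e = v) :=
          Finset.mem_filter.mpr ⟨hxq, hxv⟩
        rw [hels] at this
        exact hxe (Finset.mem_singleton.mp this)
    refine ⟨q :: P', ?_, ?_, ?_, ?_, ?_⟩
    · intro x hx
      rcases List.mem_cons.mp hx with rfl | hx
      exacts [hq, hP'path x hx]
    · refine List.pairwise_cons.mpr ⟨?_, hP'disj⟩
      intro q' hq' x hxq hxq'
      have : x ∈ A₂ := hP'sub q' hq' x hxq'
      exact (Finset.mem_sdiff.mp this).2 (List.mem_toFinset.mpr hxq)
    · have hpos : 1 ≤ inCard G A v := by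
        rw [inCard]; exact Finset.card_pos.mpr ⟨e, he⟩
      simp only [List.length_cons, hP'len, hA₂val]
      omega
    · ext x
      simp only [Set.mem_setOf_eq, List.mem_cons]
      constructor
      · rintro ⟨p', rfl | hp', hlast⟩
        · rw [hqdef, List.getLast?_concat] at hlast
          have : x = e := (Option.some_injective _ hlast.symm)
          rw [this]; exact_mod_cast he
        · have : x ∈ ({e' | ∃ p ∈ P', p.getLast? = some e'} : Set E) := ⟨p', hp', hlast⟩
          rw [hP'set, hA₂filter] at this
          exact_mod_cast Finset.mem_of_mem_erase (by exact_mod_cast this)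
      · intro hx
        by_cases hxe : x = e
        · exact ⟨q, Or.inl rfl, by rw [hqdef, hxe, List.getLast?_concat]⟩
        · have : x ∈ ({e' | ∃ p ∈ P', p.getLast? = some e'} : Set E) := by
            rw [hP'set, hA₂filter]
            exact_mod_cast Finset.mem_erase.mpr ⟨hxe, by exact_mod_cast hx⟩
          obtain ⟨p', hp', hlast⟩ := this
          exact ⟨p', Or.inr hp', hlast⟩
    · intro p' hp' x hx
      rcases List.mem_cons.mp hp' with rfl | hp'
      · exact hqsub (List.mem_toFinset.mpr hx)
      · exact (Finset.mem_sdiff.mp (hP'sub p' hp' x hx)).1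

end Digraph'
namespace Digraph'

variable {V E : Type} [Fintype V] [Fintype E] {G : Digraph' V E} {F : Set E} {r v : V}

/-- The residual digraph: each edge in both directions. -/
def resD (G : Digraph' V E) : Digraph' V (E × Bool) where
  tail ε := if ε.2 then G.tail ε.1 else G.head ε.1
  head ε := if ε.2 then G.head ε.1 else G.tail ε.1

/-- Residual availability w.r.t. flow `A` inside `F`. -/
def resT (F : Set E) (A : Finset E) : Set (E × Bool) :=
  {ε | if ε.2 then (ε.1 ∈ F ∧ ε.1 ∉ A) else ε.1 ∈ A}

@[simp] theorem resD_tail_t (G : Digraph' V E) (e : E) : (resD G).tail (e, true) = G.tail e := rfl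
@[simp] theorem resD_head_t (G : Digraph' V E) (e : E) : (resD G).head (e, true) = G.head e := rfl
@[simp] theorem resD_tail_f (G : Digraph' V E) (e : E) : (resD G).tail (e, false) = G.head e := rfl
@[simp] theorem resD_head_f (G : Digraph' V E) (e : E) : (resD G).head (e, false) = G.tail e := rfl

theorem res_split (G : Digraph' V E) (es : List (E × Bool)) (w : V) :
    (inL (resD G) es w =
      inL G (es.filterMap (fun ε => if ε.2 then some ε.1 else none)) w +
        outL G (es.filterMap (fun ε => if ε.2 then none else some ε.1)) w) ∧
    (outL (resD G) es w =
      outL G (es.filterMap (fun ε => if ε.2 then some ε.1 else none)) w +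
        inL G (es.filterMap (fun ε => if ε.2 then none else some ε.1)) w) := by
  induction es with
  | nil => simp [inL, outL]
  | cons ε es ih =>
    obtain ⟨e, b⟩ := ε
    obtain ⟨ih1, ih2⟩ := ih
    cases b
    · simp only [List.filterMap_cons, Bool.false_eq_true, ite_false, inL_cons, outL_cons,
        resD_head_f, resD_tail_f]
      grind
    · simp only [List.filterMap_cons, ite_true, inL_cons, outL_cons, resD_head_t, resD_tail_t]
      grind

theorem filterMap_true_sub {es : List (E × Bool)} {x : E}
    (hx : x ∈ es.filterMap (fun ε => if ε.2 then some ε.1 else none)) : (x, true) ∈ es := by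
  obtain ⟨⟨e, b⟩, hmem, hb⟩ := List.mem_filterMap.mp hx
  cases b
  · simp at hb
  · simp only [if_true] at hb
    cases Option.some_injective _ hb
    exact hmem

theorem filterMap_false_sub {es : List (E × Bool)} {x : E}
    (hx : x ∈ es.filterMap (fun ε => if ε.2 then none else some ε.1)) : (x, false) ∈ es := by
  obtain ⟨⟨e, b⟩, hmem, hb⟩ := List.mem_filterMap.mp hx
  cases b
  · simp only [Bool.false_eq_true, ite_false] at hb
    cases Option.some_injective _ hb
    exact hmem
  · simp at hb

/-- Augmenting along a residual path from `r` to `v`. -/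
theorem reach_aug (hv : v ≠ r) {A : Finset E} (hA : G.FlowAt F r v A)
    (hreach : (resD G).Reach (resT F A) r v) :
    ∃ A' : Finset E, G.FlowAt F r v A' ∧ inCard G A' v = inCard G A v + 1 ∧
      A.filter (fun e => G.head e = v) ⊆ A'.filter (fun e => G.head e = v) := by
  obtain ⟨es0, hwes0, hes0T⟩ := reach_walk hreach
  obtain ⟨es, hwes, hessub, hesnd⟩ := shortcut hwes0
  have hesT : ∀ ε ∈ es, ε ∈ resT F A := fun ε hε => hes0T ε (hessub ε hε)
  have hesne : es ≠ [] := by rintro rfl; exact hv (hwes : r = v).symm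
  have hndm : (es.map (resD G).head).Nodup := (List.nodup_cons.mp hesnd).2
  have hesnodup : es.Nodup := hndm.of_map _
  set X : List E := es.filterMap (fun ε => if ε.2 then some ε.1 else none) with hX
  set Y : List E := es.filterMap (fun ε => if ε.2 then none else some ε.1) with hYdef
  have hXF : ∀ x ∈ X, x ∈ F ∧ x ∉ A := by
    intro x hx
    have := hesT _ (filterMap_true_sub (hX ▸ hx))
    simpa [resT] using this
  have hYA : ∀ x ∈ Y, x ∈ A := by
    intro x hx
    have := hesT _ (filterMap_false_sub (hYdef ▸ hx))
    simpa [resT] using this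
  have hXnd : X.Nodup := by
    refine hesnodup.filterMap ?_
    rintro ⟨e, b⟩ ⟨e', b'⟩ x h1 h2
    cases b <;> cases b' <;> simp_all
  have hYnd : Y.Nodup := by
    refine hesnodup.filterMap ?_
    rintro ⟨e, b⟩ ⟨e', b'⟩ x h1 h2
    cases b <;> cases b' <;> simp_all
  set Xf : Finset E := X.toFinset with hXf
  set Yf : Finset E := Y.toFinset with hYf
  have hYsubA : Yf ⊆ A := fun x hx => hYA x (List.mem_toFinset.mp hx)
  have hXdisjA : ∀ x ∈ Xf, x ∉ A := fun x hx => (hXF x (List.mem_toFinset.mp hx)).2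
  -- residual degree identities
  have hres : ∀ w, (inCard G Xf w + outCard G Yf w =
        if w ∈ es.map (resD G).head then 1 else 0) ∧
      (outCard G Xf w + inCard G Yf w =
        if (w = r ∨ (w ∈ es.map (resD G).head ∧ w ≠ v)) then 1 else 0) := by
    intro w
    have h1 := (res_split G es w).1
    have h2 := (res_split G es w).2
    rw [inL_path hndm] at h1
    rw [outL_path hwes hesnd hesne] at h2
    constructor
    · rw [hXf, hYf, inCard_toFinset hXnd, outCard_toFinset hYnd, hX, hYdef]
      exact h1.symm
    · rw [hXf, hYf, outCard_toFinset hXnd, inCard_toFinset hYnd, hX, hYdef]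
      exact h2.symm
  set A' : Finset E := (A \ Yf) ∪ Xf with hA'
  have hkey : ∀ w, (inCard G A' w + inCard G Yf w = inCard G A w + inCard G Xf w) ∧
      (outCard G A' w + outCard G Yf w = outCard G A w + outCard G Xf w) := by
    intro w
    have hdisj : Disjoint (A \ Yf) Xf := by
      rw [Finset.disjoint_left]
      exact fun x hx hx' => hXdisjA x hx' (Finset.mem_sdiff.mp hx).1
    have e1 : inCard G A' w = inCard G (A \ Yf) w + inCard G Xf w := by
      rw [hA', inCard_union hdisj]
    have e2 : outCard G A' w = outCard G (A \ Yf) w + outCard G Xf w := by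
      rw [hA', outCard_union hdisj]
    have e3 := inCard_sdiff (G := G) hYsubA w
    have e4 := outCard_sdiff (G := G) hYsubA w
    omega
  have hvmem : v ∈ es.map (resD G).head := mem_head_of_walk hwes hesne
  have houtYv : outCard G Yf v = 0 := by
    have := hA.noout
    have hle := outCard_mono (G := G) hYsubA v
    omega
  have hresv : inCard G Xf v = 1 ∧ inCard G Yf v = 0 ∧ outCard G Xf v = 0 := by
    have h1 := (hres v).1
    have h2 := (hres v).2
    rw [if_pos hvmem] at h1
    rw [if_neg (by rintro (h | ⟨_, h⟩); exacts [hv h, h rfl])] at h2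
    omega
  refine ⟨A', ⟨?_, ?_, ?_⟩, ?_, ?_⟩
  · intro x hx
    rcases Finset.mem_union.mp hx with h | h
    · exact hA.sub x (Finset.mem_sdiff.mp h).1
    · exact (hXF x (List.mem_toFinset.mp h)).1
  · intro w hwr hwv
    have h1 := (hres w).1
    have h2 := (hres w).2
    have hc : (if (w = r ∨ (w ∈ es.map (resD G).head ∧ w ≠ v)) then (1:ℕ) else 0) =
        (if w ∈ es.map (resD G).head then 1 else 0) := by
      refine if_congr ⟨?_, ?_⟩ rfl rfl
      · rintro (h | ⟨h, _⟩); exacts [absurd h hwr, h]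
      · exact fun h => Or.inr ⟨h, hwv⟩
    rw [hc] at h2
    have h3 := (hkey w).1
    have h4 := (hkey w).2
    have h5 := hA.consv w hwr hwv
    omega
  · have h4 := (hkey v).2
    have h5 := hA.noout
    have h6 := hresv.2.2
    omega
  · have h3 := (hkey v).1
    have h6 := hresv.1
    have h7 := hresv.2.1
    omega
  · intro x hx
    obtain ⟨hxA, hxv⟩ := Finset.mem_filter.mp hx
    have hxY : x ∉ Yf := by
      intro h
      have : 0 < inCard G Yf v :=
        Finset.card_pos.mpr ⟨x, Finset.mem_filter.mpr ⟨h, hxv⟩⟩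
      have := hresv.2.1
      omega
    exact Finset.mem_filter.mpr
      ⟨Finset.mem_union_left _ (Finset.mem_sdiff.mpr ⟨hxA, hxY⟩), hxv⟩

end Digraph'
namespace Digraph'

variable {V E : Type} [Fintype V] [Fintype E] {G : Digraph' V E} {F : Set E} {r v : V}

theorem res_cut (hr : ∀ e, G.head e ≠ r) (hv : v ≠ r) {A : Finset E} (hA : G.FlowAt F r v A)
    (hnr : ¬ (resD G).Reach (resT F A) r v) :
    ∃ S : Finset V, r ∈ S ∧ v ∉ S ∧ cutVal G F S = inCard G A v := by
  set S := Finset.univ.filter (fun w => (resD G).Reach (resT F A) r w) with hS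
  have hmemS : ∀ w, w ∈ S ↔ (resD G).Reach (resT F A) r w := by
    intro w; simp [hS]
  have hrS : r ∈ S := (hmemS r).mpr Relation.ReflTransGen.refl
  have hvS : v ∉ S := fun h => hnr ((hmemS v).mp h)
  have hstep : ∀ ε ∈ resT F A, (resD G).tail ε ∈ S → (resD G).head ε ∈ S := fun ε hε h =>
    (hmemS _).mpr (((hmemS _).mp h).tail ⟨ε, hε, rfl, rfl⟩)
  have hcutA : Finset.univ.filter (fun e => e ∈ F ∧ G.tail e ∈ S ∧ G.head e ∉ S) =
      A.filter (fun e => G.tail e ∈ S ∧ G.head e ∉ S) := by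
    ext e
    simp only [Finset.mem_filter, Finset.mem_univ, true_and]
    constructor
    · rintro ⟨heF, htS, hhS⟩
      refine ⟨?_, htS, hhS⟩
      by_contra heA
      exact hhS (by simpa using hstep (e, true) (by simp [resT, heF, heA]) (by simpa using htS))
    · rintro ⟨heA, h⟩
      exact ⟨hA.sub e heA, h⟩
  have hcrossIn : crossIn G A S = 0 := by
    rw [crossIn, Finset.card_eq_zero, Finset.filter_eq_empty_iff]
    intro e heA h
    exact h.1 (by simpa using hstep (e, false) (by simp [resT, heA]) (by simpa using h.2))
  have hval := flow_cut hr hA hv hrS hvS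
  refine ⟨S, hrS, hvS, ?_⟩
  have h2 : cutVal G F S = crossOut G A S := by rw [cutVal, hcutA]; rfl
  rw [hcrossIn] at hval
  omega

theorem flow_aug (hr : ∀ e, G.head e ≠ r) (hv : v ≠ r) {A : Finset E}
    (hA : G.FlowAt F r v A) (hlt : inCard G A v < G.lam F r v) :
    ∃ A' : Finset E, G.FlowAt F r v A' ∧ inCard G A' v = inCard G A v + 1 ∧
      A.filter (fun e => G.head e = v) ⊆ A'.filter (fun e => G.head e = v) := by
  by_cases hreach : (resD G).Reach (resT F A) r v
  · exact reach_aug hv hA hreach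
  · obtain ⟨S, hrS, hvS, hcut⟩ := res_cut hr hv hA hreach
    have := lam_le_cutVal (F := F) hr hv hrS hvS
    omega

theorem exists_mincut (hr : ∀ e, G.head e ≠ r) (hv : v ≠ r) (F : Set E) :
    ∃ S : Finset V, r ∈ S ∧ v ∉ S ∧ cutVal G F S = G.lam F r v := by
  obtain ⟨P, hlen, hP, hd⟩ := lam_spec (G := G) (F := F) hv
  obtain ⟨hfl, hval, _⟩ := sys_flow hv hP hd
  have hnr : ¬ (resD G).Reach (resT F P.flatten.toFinset) r v := by
    intro hreach
    obtain ⟨A', hA', hval', _⟩ := reach_aug hv hfl hreach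
    obtain ⟨P', hP', hd', hlen', _, _⟩ := flow_decomp hr hv A' hA'
    have := le_lam hv hP' hd'
    omega
  obtain ⟨S, h1, h2, h3⟩ := res_cut hr hv hfl hnr
  exact ⟨S, h1, h2, by rw [h3, hval, hlen]⟩

theorem flow_iter (hr : ∀ e, G.head e ≠ r) (hv : v ≠ r) :
    ∀ (k : ℕ) (A : Finset E), G.FlowAt F r v A →
      inCard G A v + k ≤ G.lam F r v →
      ∃ A' : Finset E, G.FlowAt F r v A' ∧ inCard G A' v = inCard G A v + k ∧
        A.filter (fun e => G.head e = v) ⊆ A'.filter (fun e => G.head e = v) := by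
  intro k
  induction k with
  | zero => exact fun A hA _ => ⟨A, hA, by omega, le_refl _⟩
  | succ k ih =>
    intro A hA hle
    obtain ⟨A'', h1, h2, h3⟩ := flow_aug hr hv hA (by omega)
    obtain ⟨A', h4, h5, h6⟩ := ih A'' h1 (by omega)
    exact ⟨A', h4, by omega, h3.trans h6⟩

end Digraph'
namespace Digraph'

variable {V E : Type} [Fintype V] [Fintype E] {G : Digraph' V E} {F : Set E} {r v : V}

theorem cutVal_submod (F : Set E) (S T : Finset V) :
    cutVal G F (S ∩ T) + cutVal G F (S ∪ T) ≤ cutVal G F S + cutVal G F T := by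
  simp only [cutVal, Finset.card_filter]
  rw [← Finset.sum_add_distrib, ← Finset.sum_add_distrib]
  refine Finset.sum_le_sum fun e _ => ?_
  by_cases hF : e ∈ F
  · by_cases h1 : G.tail e ∈ S <;> by_cases h2 : G.tail e ∈ T <;>
      by_cases h3 : G.head e ∈ S <;> by_cases h4 : G.head e ∈ T <;>
      simp [Finset.mem_inter, Finset.mem_union, hF, h1, h2, h3, h4]
  · simp [hF]

theorem exists_good_edge (hr : ∀ e, G.head e ≠ r) {H : Set E} {u : V} (hu : u ≠ r)
    (hlt : G.lam H r u < G.lam Set.univ r u) :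
    ∃ e, e ∉ H ∧ G.lam H r (G.head e) < G.lam (insert e H) r (G.head e) := by
  by_contra hno
  push_neg at hno
  obtain ⟨S, hSmem, hSmin⟩ := Finset.exists_min_image
    (Finset.univ.filter (fun S : Finset V => r ∈ S ∧ u ∉ S ∧ cutVal G H S = G.lam H r u))
    Finset.card (by
      obtain ⟨S, h1, h2, h3⟩ := exists_mincut (G := G) hr hu H
      exact ⟨S, by simp [h1, h2, h3]⟩)
  simp only [Finset.mem_filter, Finset.mem_univ, true_and] at hSmem
  obtain ⟨hrS, huS, hScut⟩ := hSmem
  have hlt2 : cutVal G H S < cutVal G Set.univ S := by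
    have := lam_le_cutVal (G := G) (F := Set.univ) hr hu hrS huS
    omega
  obtain ⟨e, heH, htS, hhS⟩ : ∃ e, e ∉ H ∧ G.tail e ∈ S ∧ G.head e ∉ S := by
    by_contra hne
    have hEq : cutVal G Set.univ S ≤ cutVal G H S := by
      apply Finset.card_le_card
      intro x hx
      simp only [Finset.mem_filter] at hx ⊢
      obtain ⟨hxu, -, ht, hh⟩ := hx
      by_cases hxH : x ∈ H
      · exact ⟨hxu, hxH, ht, hh⟩
      · exact absurd ⟨x, hxH, ht, hh⟩ hne
    omega
  have hv'r : G.head e ≠ r := hr e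
  have heq : G.lam (insert e H) r (G.head e) = G.lam H r (G.head e) :=
    le_antisymm (hno e heH)
      (lam_mono hv'r (Set.subset_insert e H))
  obtain ⟨T, hrT, hv'T, hTcut⟩ := exists_mincut (G := G) hr hv'r (insert e H)
  have hTH : cutVal G H T = G.lam H r (G.head e) := by
    have h1 : G.lam H r (G.head e) ≤ cutVal G H T := lam_le_cutVal hr hv'r hrT hv'T
    have h2 : cutVal G H T ≤ cutVal G (insert e H) T :=
      cutVal_mono (Set.subset_insert e H) T
    omega
  have hxT : G.tail e ∉ T := by
    intro hcr
    have hlt3 : cutVal G H T < cutVal G (insert e H) T := by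
      apply Finset.card_lt_card
      refine (Finset.ssubset_iff_of_subset fun x hx => ?_).mpr ⟨e, ?_, ?_⟩
      · simp only [Finset.mem_filter] at hx ⊢
        exact ⟨hx.1, Set.mem_insert_iff.mpr (Or.inr hx.2.1), hx.2.2⟩
      · simp only [Finset.mem_filter]
        exact ⟨Finset.mem_univ _, Set.mem_insert_iff.mpr (Or.inl rfl), hcr, hv'T⟩
      · simp only [Finset.mem_filter]
        rintro ⟨-, hx, -⟩
        exact heH hx
    omega
  have hsubm := cutVal_submod (G := G) H S T
  have h1 : G.lam H r u ≤ cutVal G H (S ∩ T) :=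
    lam_le_cutVal hr hu (Finset.mem_inter.mpr ⟨hrS, hrT⟩)
      (fun h => huS (Finset.mem_inter.mp h).1)
  have h2 : G.lam H r (G.head e) ≤ cutVal G H (S ∪ T) :=
    lam_le_cutVal hr hv'r (Finset.mem_union_left _ hrS)
      (fun h => by
        rcases Finset.mem_union.mp h with h | h
        exacts [hhS h, hv'T h])
  have hSTcut : cutVal G H (S ∩ T) = G.lam H r u := by omega
  have hcard : (S ∩ T).card < S.card := by
    refine Finset.card_lt_card ⟨Finset.inter_subset_left, fun hss => ?_⟩
    exact hxT (Finset.mem_inter.mp (hss htS)).2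
  have := hSmin (S ∩ T) (by
    simp only [Finset.mem_filter, Finset.mem_univ, true_and]
    exact ⟨Finset.mem_inter.mpr ⟨hrS, hrT⟩, fun h => huS (Finset.mem_inter.mp h).1, hSTcut⟩)
  omega

end Digraph'
open Digraph' in
/-- Key lemma: if `λ_H(r,u) < λ_D(r,u)` then some edge `e ∉ H` with head `v`
is a coloop of the gammoid `G_{H+e}(v)`. -/
theorem stmt0 {V E : Type} [Fintype V] [Fintype E] (D : Digraph' V E) (r : V)
    (hr : ∀ e, D.head e ≠ r) (H : Set E) (u : V) (hu : u ≠ r)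
    (hlt : D.lam H r u < D.lam Set.univ r u) :
    ∃ e ∉ H, ∀ I : Set E, D.InGammoid H r (D.head e) I →
      D.InGammoid (insert e H) r (D.head e) (insert e I) := by
  obtain ⟨e, heH, hlt'⟩ := exists_good_edge hr hu hlt
  refine ⟨e, heH, ?_⟩
  intro I hI
  have hv : D.head e ≠ r := hr e
  obtain ⟨P, hP, hd, hIeq⟩ := hI
  obtain ⟨hfl, hval, hset⟩ := sys_flow hv hP hd
  have hIfin : I = ↑(P.flatten.toFinset.filter (fun x => D.head x = D.head e)) := by
    rw [hIeq, hset]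
  have hfl' : D.FlowAt (insert e H) r (D.head e) P.flatten.toFinset :=
    ⟨fun x hx => Set.mem_insert_iff.mpr (Or.inr (hfl.sub x hx)), hfl.consv, hfl.noout⟩
  have hkH : inCard D P.flatten.toFinset (D.head e) ≤ D.lam H r (D.head e) := by
    rw [hval]; exact le_lam hv hP hd
  obtain ⟨A', hA', hval', hsub'⟩ := flow_iter (F := insert e H) hr hv
    (D.lam (insert e H) r (D.head e) - inCard D P.flatten.toFinset (D.head e))
    P.flatten.toFinset hfl' (by omega)
  have hvalA' : inCard D A' (D.head e) = D.lam (insert e H) r (D.head e) := by omega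
  have heA' : e ∈ A' := by
    by_contra heA'
    have hA'H : D.FlowAt H r (D.head e) A' :=
      ⟨fun x hx => (Set.mem_insert_iff.mp (hA'.sub x hx)).resolve_left
        (fun hxe => heA' (hxe ▸ hx)), hA'.consv, hA'.noout⟩
    obtain ⟨P', hP', hd', hlen', -, -⟩ := flow_decomp hr hv A' hA'H
    have := le_lam hv hP' hd'
    omega
  obtain ⟨Q, hQ, hdQ, hlenQ, hsetQ, -⟩ := flow_decomp hr hv A' hA'
  set Qf : List (List E) := Q.filter
    (fun p => decide (∃ y, p.getLast? = some y ∧ y ∈ insert e I)) with hQf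
  refine ⟨Qf, ?_, ?_, ?_⟩
  · intro p hp
    exact hQ p (List.mem_of_mem_filter hp)
  · exact hdQ.sublist List.filter_sublist
  · ext x
    simp only [Set.mem_setOf_eq]
    constructor
    · intro hx
      have hxQ : x ∈ {e' | ∃ p ∈ Q, p.getLast? = some e'} := by
        rw [hsetQ]
        rw [Finset.mem_coe]
        rcases Set.mem_insert_iff.mp hx with rfl | hxI
        · exact Finset.mem_filter.mpr ⟨heA', rfl⟩
        · have hxA : x ∈ P.flatten.toFinset.filter (fun y => D.head y = D.head e) := by
            have h2 : x ∈ (↑(P.flatten.toFinset.filter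
                (fun y => D.head y = D.head e)) : Set E) := hIfin ▸ hxI
            rwa [Finset.mem_coe] at h2
          exact hsub' hxA
      obtain ⟨p, hpQ, hlast⟩ := hxQ
      refine ⟨p, ?_, hlast⟩
      rw [hQf]
      exact List.mem_filter.mpr ⟨hpQ, decide_eq_true ⟨x, hlast, hx⟩⟩
    · rintro ⟨p, hpQf, hlast⟩
      have hmem := List.mem_filter.mp (hQf ▸ hpQf)
      obtain ⟨y, hy1, hy2⟩ : ∃ y, p.getLast? = some y ∧ y ∈ insert e I :=
        of_decide_eq_true hmem.2
      rw [hlast] at hy1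
      obtain rfl := Option.some_injective _ hy1
      exact hy2
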